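/- Let p ∈ ℕ, λ > 0, Σ̂ a p×p real symmetric positive semidefinite matrix, Σ̂_λ := Σ̂ + λ·I_p, ρ ≥ 0, and β̂, β_λ, γ, ε_λ ∈ ℝ^p. Let g(Σ̂_λ) denote the matrix obtained by applying g(x) := min(ρ·x, 1)^{1/2} to Σ̂_λ via the spectral calculus. Assume (i) ‖Σ̂_λ^{1/2}(β̂ − β_λ)‖² ≤ 2‖Σ̂_λ^{1/2} exp(−ρ·Σ̂_λ/2) β_λ‖² + 2‖g(Σ̂_λ) ε_λ‖², and (ii) ⟨Σ̂_λ exp(−ρ·Σ̂_λ/2) β_λ, γ − β_λ⟩ ≥ 0. Then ‖Σ̂_λ^{1/2}(β̂ − γ)‖² ≤ 4‖Σ̂_λ^{1/2}(exp(−ρ·Σ̂_λ/2) β_λ + γ − β_λ)‖² + 4‖g(Σ̂_λ) ε_λ‖². -/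

import Mathlib

open Matrix

/-- Squared Euclidean norm on `Fin p → ℝ`. -/
noncomputable def sqnorm {p : ℕ} (v : Fin p → ℝ) : ℝ := ∑ i, (v i) ^ 2

/-- Euclidean inner product on `Fin p → ℝ`. -/
noncomputable def ip {p : ℕ} (v w : Fin p → ℝ) : ℝ := ∑ i, v i * w i

lemma sqnorm_sub_le {p : ℕ} (v w : Fin p → ℝ) :
    sqnorm (v - w) ≤ 2 * sqnorm v + 2 * sqnorm w := by
  have : ∀ i ∈ Finset.univ, ((v - w) i) ^ 2 ≤ 2 * (v i)^2 + 2 * (w i)^2 := by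
    intro i _; simp only [Pi.sub_apply]; nlinarith [sq_nonneg (v i + w i)]
  calc sqnorm (v - w) ≤ ∑ i, (2 * (v i)^2 + 2 * (w i)^2) := Finset.sum_le_sum this
    _ = 2 * sqnorm v + 2 * sqnorm w := by
        rw [Finset.sum_add_distrib, ← Finset.mul_sum, ← Finset.mul_sum]; rfl

lemma sqnorm_add {p : ℕ} (v w : Fin p → ℝ) :
    sqnorm (v + w) = sqnorm v + 2 * ip v w + sqnorm w := by
  simp only [sqnorm, ip, Pi.add_apply, ← Finset.sum_add_distrib, Finset.mul_sum]
  exact Finset.sum_congr rfl (fun i _ => by ring)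

lemma ip_mulVec_symm {p : ℕ} (A : Matrix (Fin p) (Fin p) ℝ) (hA : Aᵀ = A)
    (v w : Fin p → ℝ) : ip (A *ᵥ v) (A *ᵥ w) = ip ((A * A) *ᵥ v) w := by
  show (A *ᵥ v) ⬝ᵥ (A *ᵥ w) = ((A * A) *ᵥ v) ⬝ᵥ w
  rw [dotProduct_mulVec, ← mulVec_transpose, hA, mulVec_mulVec]

/-- from the bound on the loss at the intrinsic target `β_λ` and the
compatibility condition on `γ`, the regularised prediction loss at the target `γ` is bounded
by four times the (shifted) approximation error plus four times the stochastic error. -/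
theorem cg_loss_general_target
    (p : ℕ) (lam : ℝ) (hlam : 0 < lam)
    (Sig : Matrix (Fin p) (Fin p) ℝ) (hSig : Sig.PosSemidef)
    (Sigl : Matrix (Fin p) (Fin p) ℝ) (hSigl_def : Sigl = Sig + lam • 1)
    (hSigl : Sigl.PosSemidef)
    (rho : ℝ) (hrho : 0 ≤ rho)
    (betahat betal gam epsl : Fin p → ℝ)
    (hbound : sqnorm ((hSigl.isHermitian.cfc Real.sqrt) *ᵥ (betahat - betal)) ≤
      2 * sqnorm ((hSigl.isHermitian.cfc Real.sqrt) *ᵥ (NormedSpace.exp (-((rho / 2) • Sigl)) *ᵥ betal))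
        + 2 * sqnorm (hSigl.isHermitian.cfc (fun x => Real.sqrt (min (rho * x) 1)) *ᵥ epsl))
    (hcond : 0 ≤ ip (Sigl *ᵥ (NormedSpace.exp (-((rho / 2) • Sigl)) *ᵥ betal))
        (gam - betal)) :
    sqnorm ((hSigl.isHermitian.cfc Real.sqrt) *ᵥ (betahat - gam)) ≤
      4 * sqnorm ((hSigl.isHermitian.cfc Real.sqrt) *ᵥ (NormedSpace.exp (-((rho / 2) • Sigl)) *ᵥ betal
          + gam - betal))
        + 4 * sqnorm (hSigl.isHermitian.cfc (fun x => Real.sqrt (min (rho * x) 1)) *ᵥ epsl) := by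
  set A := hSigl.isHermitian.cfc Real.sqrt with hA
  set e : Fin p → ℝ := NormedSpace.exp (-((rho / 2) • Sigl)) *ᵥ betal with he
  set d : Fin p → ℝ := gam - betal with hd
  set S : ℝ := sqnorm (hSigl.isHermitian.cfc (fun x => Real.sqrt (min (rho * x) 1)) *ᵥ epsl)
  have hAt : Aᵀ = A := by
    rw [hA, ← hSigl.isHermitian.cfc_eq]
    have : IsSelfAdjoint (cfc Real.sqrt Sigl) := cfc_predicate _ _
    rw [← Matrix.conjTranspose_eq_transpose_of_trivial]; exact this
  have hAA : A * A = Sigl := by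
    have hspec := (Matrix.posSemidef_iff_isHermitian_and_spectrum_nonneg.mp hSigl).2
    rw [hA, ← hSigl.isHermitian.cfc_eq, ← cfc_mul Real.sqrt Real.sqrt Sigl]
    conv_rhs => rw [← cfc_id' ℝ Sigl hSigl.isHermitian.isSelfAdjoint]
    refine cfc_congr (fun x hx => ?_)
    exact Real.mul_self_sqrt (hspec hx)
  have h1 : betahat - gam = (betahat - betal) - d := by rw [hd]; abel
  have h2 : e + gam - betal = e + d := add_sub_assoc e gam betal
  have hip : ip (A *ᵥ e) (A *ᵥ d) = ip (Sigl *ᵥ e) d := by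
    rw [ip_mulVec_symm A hAt, hAA]
  have hstep : sqnorm (A *ᵥ (betahat - gam)) ≤
      2 * sqnorm (A *ᵥ (betahat - betal)) + 2 * sqnorm (A *ᵥ d) := by
    rw [h1, Matrix.mulVec_sub]
    exact sqnorm_sub_le _ _
  have hexp : sqnorm (A *ᵥ (e + gam - betal)) =
      sqnorm (A *ᵥ e) + 2 * ip (A *ᵥ e) (A *ᵥ d) + sqnorm (A *ᵥ d) := by
    rw [h2, Matrix.mulVec_add]; exact sqnorm_add _ _
  have hsq : 0 ≤ sqnorm (A *ᵥ d) := Finset.sum_nonneg (fun i _ => sq_nonneg _)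
  rw [hexp] at *
  rw [hip] at *
  linarith [hbound, hcond, hstep, hsq]
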